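/- In the setting above, for every nonreal w and every γ ∈ (0,π): (S_γ − wI)^{-1} − (S_{π/2} − wI)^{-1} = [π·tanγ + π·s₀(w)/s_{π/2}(w)]^{-1} · ⟨R̂_{π/2}(w̄)s₀, ·⟩ · R̂_{π/2}(w)s₀, i.e., for every f ∈ B, (S_γ − wI)^{-1}f − (S_{π/2} − wI)^{-1}f = (cosγ / (π s_γ(w)))·s_{π/2}(w)·⟨R̂_{π/2}(w̄)s₀, f⟩·R̂_{π/2}(w)s₀(z). -/

import Mathlib

open Complex

/-- `e^#(z) = conj (e (conj z))`. -/
noncomputable def eSharp (e : ℂ → ℂ) (z : ℂ) : ℂ :=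
  (starRingEnd ℂ) (e ((starRingEnd ℂ) z))

/-- `s_γ(z) = (i/2)(e^{iγ} e(z) - e^{-iγ} e^#(z))`. -/
noncomputable def sfun (e : ℂ → ℂ) (γ : ℝ) (z : ℂ) : ℂ :=
  I / 2 * (Complex.exp (I * γ) * e z - Complex.exp (-(I * (γ : ℂ))) * eSharp e z)

/-- The de Branges reproducing kernel
`k(z,w) = (e^#(z) e(w̄) - e(z) e^#(w̄)) / (2πi (z - w̄))`. -/
noncomputable def kfun (e : ℂ → ℂ) (z w : ℂ) : ℂ :=
  (eSharp e z * e ((starRingEnd ℂ) w) - e z * eSharp e ((starRingEnd ℂ) w)) /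
    (2 * (Real.pi : ℂ) * I * (z - (starRingEnd ℂ) w))

/-- The action of the resolvent `(S_γ - wI)⁻¹` of the canonical selfadjoint extension
`S_γ` of the multiplication operator:
`((S_γ - wI)⁻¹ f)(z) = (f(z) - (s_γ(z)/s_γ(w)) f(w)) / (z - w)`. -/
noncomputable def res (e : ℂ → ℂ) (γ : ℝ) (w : ℂ) (f : ℂ → ℂ) (z : ℂ) : ℂ :=
  (f z - sfun e γ z / sfun e γ w * f w) / (z - w)

private lemma stmt17_aux (C D F sg sp p zw : ℂ) (h1 : sg ≠ 0) (h2 : sp ≠ 0)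
    (h3 : p ≠ 0) (h4 : zw ≠ 0) :
    -(I/2)*C*D*F / (sg*sp*zw) = C/(p*sg)*sp*(-p/sp*F)*(-p/sp*(D/(2*p*I*zw))) := by
  field_simp [Complex.I_ne_zero]
  linear_combination (-(C*D*F)) * Complex.I_sq

/-- Krein's formula for the canonical selfadjoint extensions of the
multiplication operator in a de Branges space `B(e)` (`e` Hermite–Biehler without real
zeros): for nonreal `w`, `γ ∈ (0,π)`, and every `f ∈ B`, pointwise in `z`:
`(S_γ - wI)⁻¹f(z) - (S_{π/2} - wI)⁻¹f(z)
   = (cos γ/(π s_γ(w)))·s_{π/2}(w)·⟨R̂_{π/2}(w̄)s₀, f⟩·R̂_{π/2}(w)s₀(z)`,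
where `⟨R̂_{π/2}(w̄)s₀, f⟩ = -(π/s_{π/2}(w)) f(w)` and
`R̂_{π/2}(w)s₀(z) = -(π/s_{π/2}(w)) k(z,w̄)`. -/
theorem stmt17 (e : ℂ → ℂ) (he : Differentiable ℂ e)
    (hHB : ∀ z : ℂ, 0 < z.im → ‖e ((starRingEnd ℂ) z)‖ < ‖e z‖)
    (hnoreal : ∀ x : ℝ, e x ≠ 0)
    (γ : ℝ) (hγ : γ ∈ Set.Ioo 0 Real.pi)
    (w : ℂ) (hw : w.im ≠ 0)
    (hsγ : sfun e γ w ≠ 0) (hs : sfun e (Real.pi / 2) w ≠ 0)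
    (f : ℂ → ℂ) (z : ℂ) (hz : z ≠ w) :
    res e γ w f z - res e (Real.pi / 2) w f z
      = (Real.cos γ : ℂ) / ((Real.pi : ℂ) * sfun e γ w) * sfun e (Real.pi / 2) w
        * (-(Real.pi : ℂ) / sfun e (Real.pi / 2) w * f w)
        * (-(Real.pi : ℂ) / sfun e (Real.pi / 2) w * kfun e z ((starRingEnd ℂ) w)) := by
  have hπ : (Real.pi : ℂ) ≠ 0 := by exact_mod_cast Real.pi_ne_zero
  have hzw : z - w ≠ 0 := sub_ne_zero.mpr hz
  have hcos : Complex.cos ((Real.pi / 2 : ℝ) : ℂ) = 0 := by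
    rw [← Complex.ofReal_cos]; simp
  have hsin : Complex.sin ((Real.pi / 2 : ℝ) : ℂ) = 1 := by
    rw [← Complex.ofReal_sin]; simp
  have hI : Complex.exp (I * ((Real.pi / 2 : ℝ) : ℂ)) = I := by
    rw [mul_comm, Complex.exp_mul_I, hcos, hsin]; ring
  have hI' : Complex.exp (-(I * ((Real.pi / 2 : ℝ) : ℂ))) = -I := by
    rw [show -(I * ((Real.pi / 2 : ℝ) : ℂ)) = (-((Real.pi / 2 : ℝ) : ℂ)) * I by ring,
      Complex.exp_mul_I, Complex.cos_neg, Complex.sin_neg, hcos, hsin]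
    ring
  have h1 : Complex.exp (I * (γ : ℂ)) = Complex.cos (γ : ℂ) + Complex.sin (γ : ℂ) * I := by
    rw [mul_comm, Complex.exp_mul_I]
  have h2 : Complex.exp (-(I * (γ : ℂ))) = Complex.cos (γ : ℂ) - Complex.sin (γ : ℂ) * I := by
    rw [show -(I * (γ : ℂ)) = (-(γ : ℂ)) * I by ring, Complex.exp_mul_I,
      Complex.cos_neg, Complex.sin_neg]
    ring
  have key : sfun e (Real.pi / 2) z * sfun e γ w - sfun e γ z * sfun e (Real.pi / 2) w
      = -(I / 2) * Complex.cos (γ : ℂ)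
        * (eSharp e z * e w - e z * eSharp e w) := by
    simp only [sfun, h1, h2, hI, hI']
    ring_nf
    have hI3 : (I : ℂ) ^ 3 = -I := by rw [pow_succ, Complex.I_sq]; ring
    rw [hI3]
    ring
  have expand : res e γ w f z - res e (Real.pi / 2) w f z
      = (sfun e (Real.pi / 2) z * sfun e γ w - sfun e γ z * sfun e (Real.pi / 2) w) * f w
        / (sfun e γ w * sfun e (Real.pi / 2) w * (z - w)) := by
    simp only [res]
    field_simp
    ring
  rw [expand, key, kfun]
  simp only [Complex.conj_conj, ← Complex.ofReal_cos]
  exact stmt17_aux _ _ _ _ _ _ _ hsγ hs hπ hzw
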